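/- For the 1-loop massless multiedge in D = D_0 - 2\epsilon dimensions, the Mellin transform F(\epsilon,\rho) = \frac{\Gamma(2-\frac{D_0}{2}-\rho+\epsilon)\Gamma(\frac{D_0}{2}-\epsilon-1+\rho)\Gamma(\frac{D_0}{2}-\epsilon-1)}{e^{-\gamma_E\epsilon}\Gamma(D_0-2-2\epsilon+\rho)\Gamma(1-\rho)} at D_0 = 4 satisfies the reflection identity F(\epsilon, \rho+\epsilon) = \frac{-e^{\gamma_E\epsilon}\pi\Gamma(1-\epsilon)}{\sin(\pi\rho)\Gamma(1-\epsilon-\rho)\Gamma(2-\epsilon+\rho)}, and consequently \frac{1}{F(\epsilon,\rho+\epsilon)} = T_0(\rho)(1 + \epsilon T_1(\rho) + O(\epsilon^2)) with T_0(\rho) = -\rho(1+\rho) and T_1(\rho) = -H_{-\rho} - H_{1+\rho}, where H_z := \gamma_E + \psi(z+1). -/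

import Mathlib

open Asymptotics

/-- The complex digamma function `ψ = Γ'/Γ`. -/
noncomputable def digammaC (z : ℂ) : ℂ := deriv Complex.Gamma z / Complex.Gamma z

/-- Analytically continued harmonic number `H_z = γ_E + ψ(z+1)`. -/
noncomputable def harmonicC (z : ℂ) : ℂ :=
  (Real.eulerMascheroniConstant : ℂ) + digammaC (z + 1)

/-- The Mellin transform of the 1-loop massless multiedge in `D = D₀ - 2ε`
dimensions. -/
noncomputable def mellinF (D0 ε ρ : ℂ) : ℂ :=
  Complex.Gamma (2 - D0/2 - ρ + ε) * Complex.Gamma (D0/2 - ε - 1 + ρ)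
      * Complex.Gamma (D0/2 - ε - 1) /
    (Complex.exp (-(Real.eulerMascheroniConstant : ℂ) * ε)
      * Complex.Gamma (D0 - 2 - 2*ε + ρ) * Complex.Gamma (1 - ρ))

private lemma analyticAt_Gamma' {s : ℂ} (hs : ∀ m : ℕ, s ≠ -m) :
    AnalyticAt ℂ Complex.Gamma s := by
  have hopen : IsOpen {z : ℂ | Complex.Gamma z ≠ 0} := by
    have h : {z : ℂ | Complex.Gamma z ≠ 0} = (fun z => (Complex.Gamma z)⁻¹) ⁻¹' {0}ᶜ := by
      ext z; simp [inv_eq_zero]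
    rw [h]
    exact isOpen_compl_singleton.preimage Complex.differentiable_one_div_Gamma.continuous
  refine DifferentiableOn.analyticAt (fun z hz => ?_) (hopen.mem_nhds (Complex.Gamma_ne_zero hs))
  refine (Complex.differentiableAt_Gamma _ (fun m hm => ?_)).differentiableWithinAt
  exact hz ((Complex.Gamma_eq_zero_iff z).mpr ⟨m, hm⟩)

private lemma taylor1_isBigO {f : ℂ → ℂ} (hf : AnalyticAt ℂ f 0) :
    (fun ε : ℂ => f ε - (f 0 + deriv f 0 * ε)) =O[nhds 0] fun ε => ε ^ 2 := by
  obtain ⟨p, hp⟩ := hf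
  have h := hp.isBigO_sub_partialSum_pow 2
  have e0 : p.coeff 0 = f 0 := hp.coeff_zero _
  have e1 : p.coeff 1 = deriv f 0 := by
    rw [hp.deriv]
    rw [FormalMultilinearSeries.apply_eq_pow_smul_coeff]
    simp
  have h2 : (fun y : ℂ => f (0 + y) - p.partialSum 2 y)
      = fun ε : ℂ => f ε - (f 0 + deriv f 0 * ε) := by
    funext y
    simp [FormalMultilinearSeries.partialSum, Finset.sum_range_succ, e0, e1]
    ring
  rw [h2] at h
  refine h.trans (Asymptotics.isBigO_of_le _ fun y => ?_)
  simp [norm_pow]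

private lemma mellin_part1 (ε ρ : ℂ) :
    mellinF 4 ε (ρ + ε) =
      -Complex.exp ((Real.eulerMascheroniConstant : ℂ) * ε) * (Real.pi : ℂ)
          * Complex.Gamma (1 - ε) /
        (Complex.sin (Real.pi * ρ) * Complex.Gamma (1 - ε - ρ)
          * Complex.Gamma (2 - ε + ρ)) := by
  unfold mellinF
  rw [show (2:ℂ) - 4/2 - (ρ+ε) + ε = -ρ by ring,
    show (4:ℂ)/2 - ε - 1 + (ρ+ε) = 1+ρ by ring,
    show (4:ℂ)/2 - ε - 1 = 1-ε by ring,
    show (4:ℂ) - 2 - 2*ε + (ρ+ε) = 2-ε+ρ by ring,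
    show (1:ℂ) - (ρ+ε) = 1-ε-ρ by ring]
  have hrefl : Complex.Gamma (-ρ) * Complex.Gamma (1 + ρ)
      = -(Real.pi : ℂ) / Complex.sin ((Real.pi : ℂ) * ρ) := by
    have h := Complex.Gamma_mul_Gamma_one_sub (-ρ)
    rw [show (1 : ℂ) - -ρ = 1 + ρ by ring] at h
    rw [h, show (Real.pi : ℂ) * -ρ = -((Real.pi : ℂ) * ρ) by ring, Complex.sin_neg,
      div_neg, neg_div]
  rw [hrefl, show Complex.exp (-(Real.eulerMascheroniConstant : ℂ) * ε)
      = (Complex.exp ((Real.eulerMascheroniConstant : ℂ) * ε))⁻¹ by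
    rw [neg_mul, Complex.exp_neg]]
  simp only [div_eq_mul_inv, mul_inv, inv_inv, neg_mul, neg_inv, mul_neg]
  ring

/-- at `D₀ = 4` the Mellin transform satisfies the reflection
identity
`F(ε, ρ+ε) = -e^{γ_E ε} π Γ(1-ε) / (sin(πρ) Γ(1-ε-ρ) Γ(2-ε+ρ))`,
and consequently `1/F(ε,ρ+ε) = T₀(ρ)(1 + ε T₁(ρ) + O(ε²))` with
`T₀(ρ) = -ρ(1+ρ)` and `T₁(ρ) = -H_{-ρ} - H_{1+ρ}`. -/
theorem mellin_multiedge_D4 :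
    (∀ ε ρ : ℂ, Complex.sin (Real.pi * ρ) ≠ 0 →
      mellinF 4 ε (ρ + ε) =
        -Complex.exp ((Real.eulerMascheroniConstant : ℂ) * ε) * (Real.pi : ℂ)
            * Complex.Gamma (1 - ε) /
          (Complex.sin (Real.pi * ρ) * Complex.Gamma (1 - ε - ρ)
            * Complex.Gamma (2 - ε + ρ))) ∧
    (∀ ρ : ℂ, (∀ n : ℤ, ρ ≠ (n : ℂ)) →
      (fun ε : ℂ => 1 / mellinF 4 ε (ρ + ε) -
          (-ρ * (1 + ρ)) * (1 + ε * (-harmonicC (-ρ) - harmonicC (1 + ρ))))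
        =O[nhds (0:ℂ)] fun ε => ε ^ 2) := by
  constructor
  · intro ε ρ _
    exact mellin_part1 ε ρ
  intro ρ hρ
  have hπ : (Real.pi : ℂ) ≠ 0 := Complex.ofReal_ne_zero.mpr Real.pi_ne_zero
  have h1ρ : ∀ m : ℕ, (1 : ℂ) - ρ ≠ -m := fun m h => hρ (m + 1) (by push_cast; linear_combination -h)
  have h2ρ : ∀ m : ℕ, (2 : ℂ) + ρ ≠ -m := fun m h => hρ (-(m : ℤ) - 2) (by push_cast; linear_combination h)
  have hρ0 : ∀ m : ℕ, ρ ≠ -m := fun m h => hρ (-(m : ℤ)) (by push_cast; linear_combination h)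
  have h1 : ∀ m : ℕ, (1 : ℂ) ≠ -m := by
    intro m h
    have h2 : (1 : ℤ) = -(m : ℤ) := by exact_mod_cast h
    omega
  have hρne : ρ ≠ 0 := fun h => hρ 0 (by push_cast; exact h)
  have h1ρne : 1 + ρ ≠ 0 := fun h => hρ (-1) (by push_cast; linear_combination h)
  have hA : Complex.Gamma (1 - ρ) ≠ 0 := Complex.Gamma_ne_zero h1ρ
  have hB : Complex.Gamma (2 + ρ) ≠ 0 := Complex.Gamma_ne_zero h2ρ
  have hΓρ : Complex.Gamma ρ ≠ 0 := Complex.Gamma_ne_zero hρ0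
  -- derivative helpers
  have hGammaD : ∀ c : ℂ, (∀ m : ℕ, c ≠ -m) →
      HasDerivAt (fun ε : ℂ => Complex.Gamma (c - ε)) (-deriv Complex.Gamma c) 0 := by
    intro c hc
    have hinner : HasDerivAt (fun ε : ℂ => c - ε) (-1) 0 := (hasDerivAt_id 0).const_sub c
    have houter : HasDerivAt Complex.Gamma (deriv Complex.Gamma c) (c - 0) := by
      rw [sub_zero]; exact (Complex.differentiableAt_Gamma _ hc).hasDerivAt
    have h := houter.comp 0 hinner
    rw [mul_neg_one] at h
    exact h
  have hu2 : HasDerivAt (fun ε : ℂ => Complex.Gamma (1 - ε - ρ)) (-deriv Complex.Gamma (1 - ρ)) 0 := by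
    have he : (fun ε : ℂ => Complex.Gamma (1 - ε - ρ)) = fun ε : ℂ => Complex.Gamma ((1 - ρ) - ε) := by
      funext ε; congr 1; ring
    rw [he]; exact hGammaD _ h1ρ
  have hu3 : HasDerivAt (fun ε : ℂ => Complex.Gamma (2 - ε + ρ)) (-deriv Complex.Gamma (2 + ρ)) 0 := by
    have he : (fun ε : ℂ => Complex.Gamma (2 - ε + ρ)) = fun ε : ℂ => Complex.Gamma ((2 + ρ) - ε) := by
      funext ε; congr 1; ring
    rw [he]; exact hGammaD _ h2ρ
  have hu4 : HasDerivAt (fun ε : ℂ => Complex.Gamma (1 - ε)) (-deriv Complex.Gamma 1) 0 := hGammaD 1 h1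
  have hE : HasDerivAt (fun ε : ℂ => Complex.exp ((Real.eulerMascheroniConstant : ℂ) * ε))
      (Real.eulerMascheroniConstant : ℂ) 0 := by
    simpa using ((hasDerivAt_id (0:ℂ)).const_mul (Real.eulerMascheroniConstant : ℂ)).cexp
  have hden0 : -Complex.exp ((Real.eulerMascheroniConstant : ℂ) * 0) * (Real.pi : ℂ)
      * Complex.Gamma (1 - 0) ≠ 0 := by
    simp [sub_zero, Complex.Gamma_one, Complex.exp_zero, Real.pi_ne_zero]
  have hg := ((hu2.const_mul (Complex.sin ((Real.pi : ℂ) * ρ))).mul hu3).div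
    ((hE.neg.mul_const (Real.pi : ℂ)).mul hu4) hden0
  -- reflection facts
  have hsin : Complex.sin ((Real.pi : ℂ) * ρ) ≠ 0 := by
    intro h
    rw [Complex.sin_eq_zero_iff] at h
    obtain ⟨k, hk⟩ := h
    exact hρ k (mul_left_cancel₀ hπ (by rw [hk]; ring))
  have hsA : Complex.sin ((Real.pi : ℂ) * ρ) * (Complex.Gamma ρ * Complex.Gamma (1 - ρ))
      = (Real.pi : ℂ) := by
    rw [Complex.Gamma_mul_Gamma_one_sub]; field_simp [hsin]
  have hB1 : Complex.Gamma (1 + ρ) = ρ * Complex.Gamma ρ := by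
    rw [add_comm]; exact Complex.Gamma_add_one ρ hρne
  have hB2 : Complex.Gamma (2 + ρ) = (1 + ρ) * Complex.Gamma (1 + ρ) := by
    have h := Complex.Gamma_add_one (1 + ρ) h1ρne
    rw [show (1 + ρ) + 1 = 2 + ρ by ring] at h
    exact h
  have hsAB : Complex.sin ((Real.pi : ℂ) * ρ) * Complex.Gamma (1 - ρ) * Complex.Gamma (2 + ρ)
      = ρ * (1 + ρ) * (Real.pi : ℂ) := by
    rw [hB2, hB1]; linear_combination ρ * (1 + ρ) * hsA
  have hs_eq : Complex.sin ((Real.pi : ℂ) * ρ)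
      = ρ * (1 + ρ) * (Real.pi : ℂ) / (Complex.Gamma (1 - ρ) * Complex.Gamma (2 + ρ)) := by
    rw [eq_div_iff (mul_ne_zero hA hB)]; linear_combination hsAB
  have hg0 : (fun ε : ℂ => Complex.sin ((Real.pi : ℂ) * ρ) * Complex.Gamma (1 - ε - ρ)
        * Complex.Gamma (2 - ε + ρ) /
      (-Complex.exp ((Real.eulerMascheroniConstant : ℂ) * ε) * (Real.pi : ℂ)
        * Complex.Gamma (1 - ε))) 0 = -ρ * (1 + ρ) := by
    simp only [mul_zero, sub_zero, Complex.exp_zero, Complex.Gamma_one, mul_one]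
    rw [hs_eq]
    field_simp [hA, hB, hπ]
  have hdg : deriv (fun ε : ℂ => Complex.sin ((Real.pi : ℂ) * ρ) * Complex.Gamma (1 - ε - ρ)
        * Complex.Gamma (2 - ε + ρ) /
      (-Complex.exp ((Real.eulerMascheroniConstant : ℂ) * ε) * (Real.pi : ℂ)
        * Complex.Gamma (1 - ε))) 0
      = (-ρ * (1 + ρ)) * (-harmonicC (-ρ) - harmonicC (1 + ρ)) :=
    hg.deriv.trans (by
      unfold harmonicC digammaC
      rw [show -ρ + 1 = 1 - ρ by ring, show (1:ℂ) + ρ + 1 = 2 + ρ by ring]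
      simp only [Pi.mul_apply, Pi.neg_apply, mul_zero, sub_zero, zero_sub, Complex.exp_zero, Complex.Gamma_one,
        Complex.hasDerivAt_Gamma_one.deriv, mul_one, neg_neg]
      rw [hs_eq]
      field_simp [hA, hB, hπ]
      ring_nf)
  -- analyticity
  have hAa : AnalyticAt ℂ (fun ε : ℂ => Complex.Gamma (1 - ε - ρ)) 0 := by
    have hin : AnalyticAt ℂ (fun ε : ℂ => 1 - ε - ρ) 0 :=
      (analyticAt_const.sub analyticAt_id).sub analyticAt_const
    have hout : AnalyticAt ℂ Complex.Gamma (1 - (0:ℂ) - ρ) := by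
      rw [show (1:ℂ) - 0 - ρ = 1 - ρ by ring]; exact analyticAt_Gamma' h1ρ
    have hcomp := AnalyticAt.comp (f := fun ε : ℂ => 1 - ε - ρ) (x := 0) hout hin
    exact hcomp
  have hBa : AnalyticAt ℂ (fun ε : ℂ => Complex.Gamma (2 - ε + ρ)) 0 := by
    have hin : AnalyticAt ℂ (fun ε : ℂ => 2 - ε + ρ) 0 :=
      (analyticAt_const.sub analyticAt_id).add analyticAt_const
    have hout : AnalyticAt ℂ Complex.Gamma (2 - (0:ℂ) + ρ) := by
      rw [show (2:ℂ) - 0 + ρ = 2 + ρ by ring]; exact analyticAt_Gamma' h2ρ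
    have hcomp := AnalyticAt.comp (f := fun ε : ℂ => 2 - ε + ρ) (x := 0) hout hin
    exact hcomp
  have hCa : AnalyticAt ℂ (fun ε : ℂ => Complex.Gamma (1 - ε)) 0 := by
    have hin : AnalyticAt ℂ (fun ε : ℂ => 1 - ε) 0 := analyticAt_const.sub analyticAt_id
    have hout : AnalyticAt ℂ Complex.Gamma (1 - (0:ℂ)) := by
      rw [sub_zero]; exact analyticAt_Gamma' h1
    have hcomp := hout.comp hin
    exact hcomp
  have hexpa : AnalyticAt ℂ (fun ε : ℂ => Complex.exp ((Real.eulerMascheroniConstant : ℂ) * ε)) 0 :=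
    (Complex.differentiable_exp.comp (differentiable_id.const_mul _)).analyticAt 0
  have hga : AnalyticAt ℂ (fun ε : ℂ => Complex.sin ((Real.pi : ℂ) * ρ) * Complex.Gamma (1 - ε - ρ)
        * Complex.Gamma (2 - ε + ρ) /
      (-Complex.exp ((Real.eulerMascheroniConstant : ℂ) * ε) * (Real.pi : ℂ)
        * Complex.Gamma (1 - ε))) 0 :=
    ((analyticAt_const.mul hAa).mul hBa).div
      ((hexpa.neg.mul analyticAt_const).mul hCa) hden0
  have htay := taylor1_isBigO hga
  have hF : ∀ ε : ℂ, 1 / mellinF 4 ε (ρ + ε)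
      = Complex.sin ((Real.pi : ℂ) * ρ) * Complex.Gamma (1 - ε - ρ) * Complex.Gamma (2 - ε + ρ) /
        (-Complex.exp ((Real.eulerMascheroniConstant : ℂ) * ε) * (Real.pi : ℂ)
          * Complex.Gamma (1 - ε)) := by
    intro ε
    rw [mellin_part1, one_div_div]
  have hfun : (fun ε : ℂ => 1 / mellinF 4 ε (ρ + ε) -
        (-ρ * (1 + ρ)) * (1 + ε * (-harmonicC (-ρ) - harmonicC (1 + ρ))))
      = fun ε : ℂ => (fun ε : ℂ => Complex.sin ((Real.pi : ℂ) * ρ) * Complex.Gamma (1 - ε - ρ)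
          * Complex.Gamma (2 - ε + ρ) /
        (-Complex.exp ((Real.eulerMascheroniConstant : ℂ) * ε) * (Real.pi : ℂ)
          * Complex.Gamma (1 - ε))) ε -
        ((fun ε : ℂ => Complex.sin ((Real.pi : ℂ) * ρ) * Complex.Gamma (1 - ε - ρ)
          * Complex.Gamma (2 - ε + ρ) /
        (-Complex.exp ((Real.eulerMascheroniConstant : ℂ) * ε) * (Real.pi : ℂ)
          * Complex.Gamma (1 - ε))) 0 +
          deriv (fun ε : ℂ => Complex.sin ((Real.pi : ℂ) * ρ) * Complex.Gamma (1 - ε - ρ)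
          * Complex.Gamma (2 - ε + ρ) /
        (-Complex.exp ((Real.eulerMascheroniConstant : ℂ) * ε) * (Real.pi : ℂ)
          * Complex.Gamma (1 - ε))) 0 * ε) := by
    funext ε
    rw [hF ε, hg0, hdg]
    ring
  rw [hfun]
  exact htay
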